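/- Let R be a standard tableau of shape μ with n boxes. For 1 ≤ m ≤ n, let t_m be the index of the row of R containing the entry n+1−m. Then the semistandard tableau obtained by successively row-inserting t_1, then t_2, …, then t_n into the empty tableau equals U(μ), the semistandard tableau of shape μ in which every entry in row i equals i. -/

import Mathlib

/-- A semistandard Young tableau of straight shape (rows and columns 0-indexed,
shape given by row lengths `rows`), with positive integer entries, rows weakly
increasing, columns strictly increasing; entries outside the shape are 0. -/
structure SSYT where
  rows : ℕ → ℕ
  rows_anti : ∀ i, rows (i+1) ≤ rows i
  rows_finite : ∃ d, ∀ i, d ≤ i → rows i = 0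
  entry : ℕ → ℕ → ℕ
  entry_pos : ∀ i j, j < rows i → 1 ≤ entry i j
  entry_zero : ∀ i j, rows i ≤ j → entry i j = 0
  row_weak : ∀ i j, j + 1 < rows i → entry i j ≤ entry i (j+1)
  col_strict : ∀ i j, j < rows (i+1) → entry i j < entry (i+1) j

/-- `RowInsert T x T'`: `T'` is the result of row-inserting (row bumping) `x`
into `T`.  For rows `t < m` the value `v t` bumps the leftmost strictly larger
entry, at position `pos t`; the bumped value is `v (t+1)`; at row `m` the value
`v m` is appended at the end of the row. -/
def RowInsert (T : SSYT) (x : ℕ) (T' : SSYT) : Prop :=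
  ∃ (m : ℕ) (v : ℕ → ℕ) (pos : ℕ → ℕ),
    v 0 = x ∧
    (∀ t, t < m → pos t < T.rows t ∧ v t < T.entry t (pos t) ∧
      (∀ c, c < pos t → T.entry t c ≤ v t) ∧ v (t+1) = T.entry t (pos t)) ∧
    pos m = T.rows m ∧ (∀ c, c < T.rows m → T.entry m c ≤ v m) ∧
    T'.rows = Function.update T.rows m (T.rows m + 1) ∧
    (∀ t, t ≤ m → T'.entry t (pos t) = v t) ∧
    (∀ i j, (∀ t, t ≤ m → ¬(i = t ∧ j = pos t)) → T'.entry i j = T.entry i j)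

open Finset

namespace Ins15

lemma row_le (S : SSYT) (i : ℕ) : ∀ (d j : ℕ), j + d < S.rows i → S.entry i j ≤ S.entry i (j + d) := by
  intro d
  induction d with
  | zero => intro j _; exact le_rfl
  | succ d ih =>
    intro j h
    have h1 : j + d + 1 < S.rows i := by omega
    have h2 := S.row_weak i (j + d) h1
    have h3 := ih j (by omega)
    calc S.entry i j ≤ S.entry i (j + d) := h3
      _ ≤ S.entry i (j + d + 1) := h2

lemma row_mono (S : SSYT) {i j j' : ℕ} (hjj : j ≤ j') (hj' : j' < S.rows i) :
    S.entry i j ≤ S.entry i j' := by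
  have h := row_le S i (j' - j) j (by omega)
  have e : j + (j' - j) = j' := by omega
  rwa [e] at h

lemma entry_lb (S : SSYT) : ∀ i j, j < S.rows i → i + 1 ≤ S.entry i j := by
  intro i
  induction i with
  | zero => intro j hj; exact S.entry_pos 0 j hj
  | succ i ih =>
    intro j hj
    have hj2 : j < S.rows i := lt_of_lt_of_le hj (S.rows_anti i)
    have h1 := S.col_strict i j hj
    have h2 := ih j hj2
    omega

/-- number of entries equal to `w` in row `i`. -/
def rcnt (S : SSYT) (i w : ℕ) : ℕ := ((range (S.rows i)).filter (fun j => S.entry i j = w)).card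

def fcn (S : SSYT) (F0 : ℕ → ℕ) : ℕ → ℕ → ℕ
  | 0 => F0
  | i + 1 => fun w => fcn S F0 i w + rcnt S i w

def InvP (S : SSYT) (F0 : ℕ → ℕ) : Prop :=
  ∀ i w, i + 2 ≤ w → rcnt S i w + fcn S F0 i w ≤ fcn S F0 i (w - 1)

lemma rcnt_pos (S : SSYT) {i p w : ℕ} (hp : p < S.rows i) (hw : S.entry i p = w) :
    1 ≤ rcnt S i w :=
  Finset.card_pos.2 ⟨p, Finset.mem_filter.2 ⟨Finset.mem_range.2 hp, hw⟩⟩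

lemma rcnt_zero (S : SSYT) {i w : ℕ} (h : ∀ j, j < S.rows i → S.entry i j ≠ w) :
    rcnt S i w = 0 := by
  unfold rcnt
  rw [Finset.card_eq_zero, Finset.filter_eq_empty_iff]
  intro j hj
  exact h j (Finset.mem_range.1 hj)

lemma rcnt_all (S : SSYT) {i w : ℕ} (h : ∀ j, j < S.rows i → S.entry i j = w) :
    rcnt S i w = S.rows i := by
  unfold rcnt
  rw [Finset.filter_true_of_mem (fun j hj => h j (Finset.mem_range.1 hj)), Finset.card_range]

lemma cnt_single {L p w : ℕ} (g h : ℕ → ℕ) (hp : p < L)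
    (hs : ∀ j, j < L → j ≠ p → g j = h j) :
    ((range L).filter (fun j => g j = w)).card + (if h p = w then 1 else 0)
      = ((range L).filter (fun j => h j = w)).card + (if g p = w then 1 else 0) := by
  classical
  rw [Finset.card_filter, Finset.card_filter]
  have hmem : p ∈ range L := mem_range.2 hp
  rw [← Finset.add_sum_erase _ _ hmem, ← Finset.add_sum_erase _ (fun j => if h j = w then (1:ℕ) else 0) hmem]
  have hrest : ∑ j ∈ (range L).erase p, (if g j = w then (1:ℕ) else 0)
      = ∑ j ∈ (range L).erase p, (if h j = w then (1:ℕ) else 0) := by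
    apply Finset.sum_congr rfl
    intro j hj
    obtain ⟨hjp, hjL⟩ := Finset.mem_erase.1 hj
    rw [hs j (mem_range.1 hjL) hjp]
  rw [hrest]
  ring

lemma cnt_congr {L w : ℕ} (g h : ℕ → ℕ) (hs : ∀ j, j < L → g j = h j) :
    ((range L).filter (fun j => g j = w)).card = ((range L).filter (fun j => h j = w)).card := by
  congr 1
  apply Finset.filter_congr
  intro j hj
  rw [hs j (mem_range.1 hj)]

lemma cnt_succ {L w : ℕ} (g h : ℕ → ℕ) (hs : ∀ j, j < L → g j = h j) :
    ((range (L+1)).filter (fun j => g j = w)).card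
      = ((range L).filter (fun j => h j = w)).card + (if g L = w then 1 else 0) := by
  classical
  rw [Finset.range_add_one, Finset.filter_insert]
  have hcc : ((range L).filter (fun j => g j = w)).card = ((range L).filter (fun j => h j = w)).card :=
    cnt_congr g h hs
  by_cases hg : g L = w
  · rw [if_pos hg, if_pos hg, Finset.card_insert_of_notMem (by simp), hcc]
  · rw [if_neg hg, if_neg hg, add_zero, hcc]

end Ins15
namespace Ins15

lemma step_all (S S' : SSYT) (x d : ℕ) (F0 F0' : ℕ → ℕ)
    (h : RowInsert S x S')
    (hF0 : ∀ w, F0' w + (if w = x then 1 else 0) = F0 w)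
    (hlat' : ∀ w, 1 ≤ w → F0' (w + 1) ≤ F0' w)
    (hx : 1 ≤ x)
    (hd : ∀ q, d ≤ q → S.rows q = 0)
    (hinv : InvP S F0) :
    InvP S' F0' ∧ (∀ q, d + 1 ≤ q → S'.rows q = 0) ∧
      (∀ w N, d < N → ∑ i ∈ range N, rcnt S' i w
        = (∑ i ∈ range N, rcnt S i w) + (if w = x then 1 else 0)) := by
  classical
  obtain ⟨K, vv, pos, hv0, hbump, hposK, hrowK, hrows, hset, hkeep⟩ := h
  have hKd : K ≤ d := by
    by_contra hc
    push_neg at hc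
    have h1 := (hbump d hc).1
    have h2 := hd d le_rfl
    omega
  have hrows' : ∀ i, i ≠ K → S'.rows i = S.rows i := by
    intro i hi; rw [hrows]; exact Function.update_of_ne hi _ _
  have hrowsK : S'.rows K = S.rows K + 1 := by
    rw [hrows]; exact Function.update_self _ _ _
  have hE : ∀ i j, (i ≤ K → j ≠ pos i) → S'.entry i j = S.entry i j := by
    intro i j hg
    apply hkeep
    intro u hu hc
    obtain ⟨rfl, rfl⟩ := hc
    exact hg hu rfl
  have hvE : ∀ i, i < K → vv (i+1) = S.entry i (pos i) := fun i hi => (hbump i hi).2.2.2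
  have hvlt : ∀ i, i < K → vv i < vv (i+1) := fun i hi => by
    have h1 := (hbump i hi).2.1
    rw [hvE i hi]; exact h1
  -- count equations
  have hc_lt : ∀ i, i < K → ∀ w,
      rcnt S' i w + (if vv (i+1) = w then 1 else 0)
        = rcnt S i w + (if vv i = w then 1 else 0) := by
    intro i hi w
    have hp : pos i < S.rows i := (hbump i hi).1
    have hs : ∀ j, j < S.rows i → j ≠ pos i → S'.entry i j = S.entry i j :=
      fun j _ hj => hE i j (fun _ => hj)
    have key := cnt_single (w := w) (S'.entry i) (S.entry i) hp hs
    have e1 : S'.entry i (pos i) = vv i := hset i hi.le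
    have e2 : S.entry i (pos i) = vv (i+1) := (hvE i hi).symm
    rw [e1, e2] at key
    have hr : S'.rows i = S.rows i := hrows' i (by omega)
    unfold rcnt
    rw [hr]
    exact key
  have hc_K : ∀ w, rcnt S' K w = rcnt S K w + (if vv K = w then 1 else 0) := by
    intro w
    have hs : ∀ j, j < S.rows K → S'.entry K j = S.entry K j := by
      intro j hj
      exact hE K j (fun _ => by omega)
    have key := cnt_succ (w := w) (S'.entry K) (S.entry K) hs
    have e1 : S'.entry K (S.rows K) = vv K := by
      rw [← hposK]; exact hset K le_rfl
    rw [e1] at key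
    unfold rcnt
    rw [hrowsK]
    exact key
  have hc_gt : ∀ i, K < i → ∀ w, rcnt S' i w = rcnt S i w := by
    intro i hi w
    have hs : ∀ j, j < S.rows i → S'.entry i j = S.entry i j := by
      intro j _
      exact hE i j (fun hiK => absurd hiK (by omega))
    have hr : S'.rows i = S.rows i := hrows' i (by omega)
    unfold rcnt
    rw [hr]
    exact cnt_congr _ _ hs
  -- fcn comparison
  have hfc : ∀ i, (i ≤ K → ∀ w, fcn S' F0' i w + (if vv i = w then 1 else 0) = fcn S F0 i w)
      ∧ (K < i → ∀ w, fcn S' F0' i w = fcn S F0 i w) := by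
    intro i
    induction i with
    | zero =>
      refine ⟨fun _ w => ?_, fun h0 => absurd h0 (Nat.not_lt_zero K)⟩
      have h1 := hF0 w
      simp only [fcn]
      rw [hv0]
      by_cases hwx : w = x
      · subst hwx; simp only [if_pos rfl] at h1 ⊢; omega
      · rw [if_neg (fun hh => hwx hh.symm)]
        rw [if_neg hwx] at h1
        omega
    | succ i ih =>
      constructor
      · intro hiK w
        have hi : i < K := by omega
        have h1 := ih.1 hi.le w
        have h2 := hc_lt i hi w
        simp only [fcn]
        omega
      · intro hiK w
        by_cases hik : i = K
        · subst hik
          have h1 := ih.1 le_rfl w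
          have h2 := hc_K w
          simp only [fcn]
          omega
        · have hgt : K < i := by omega
          simp only [fcn]
          rw [ih.2 hgt w, hc_gt i hgt w]
  -- strictness
  have hstrict : ∀ i, i ≤ K → fcn S F0 i (vv i + 1) + 1 ≤ fcn S F0 i (vv i) := by
    intro i hiK
    cases i with
    | zero =>
      have h1 := hF0 x
      have h2 := hF0 (x + 1)
      have h3 := hlat' x hx
      rw [if_pos rfl] at h1
      rw [if_neg (by omega)] at h2
      simp only [fcn, hv0]
      omega
    | succ j =>
      have hjK : j < K := by omega
      have hu : vv (j+1) = S.entry j (pos j) := hvE j hjK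
      have hp : pos j < S.rows j := (hbump j hjK).1
      have h1 : 1 ≤ rcnt S j (vv (j+1)) := rcnt_pos S hp hu.symm
      have hlb : j + 1 ≤ vv (j+1) := by rw [hu]; exact entry_lb S j (pos j) hp
      have h2 := hinv j (vv (j+1) + 1) (by omega)
      have e : vv (j+1) + 1 - 1 = vv (j+1) := by omega
      rw [e] at h2
      simp only [fcn]
      omega
  -- the invariant for S'
  have hInv' : InvP S' F0' := by
    intro i w hw
    rcases lt_or_ge K i with hKi | hiK
    · rw [hc_gt i hKi w, (hfc i).2 hKi w, (hfc i).2 hKi (w-1)]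
      exact hinv i w hw
    · have E1 := (hfc i).1 hiK w
      have E2 := (hfc i).1 hiK (w - 1)
      rcases eq_or_lt_of_le hiK with hik | hik
      · -- i = K
        subst hik
        have C := hc_K w
        by_cases h2 : vv i = w - 1
        · have hwv : w = vv i + 1 := by omega
          have hz : rcnt S i w = 0 := by
            apply rcnt_zero
            intro j hj
            have := hrowK j hj
            omega
          have hs := hstrict i le_rfl
          rw [if_neg (by omega : ¬ vv i = w)] at C E1
          rw [if_pos h2] at E2
          rw [← hwv] at hs
          have e : vv i = w - 1 := h2
          rw [e] at hs
          omega
        · have h4 := hinv i w hw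
          rw [if_neg h2] at E2
          by_cases h1 : vv i = w
          · rw [if_pos h1] at C E1; omega
          · rw [if_neg h1] at C E1; omega
      · -- i < K
        have C := hc_lt i hik w
        by_cases h2 : vv i = w - 1
        · have hwv : w = vv i + 1 := by omega
          rw [if_neg (by omega : ¬ vv i = w)] at C E1
          rw [if_pos h2] at E2
          by_cases h3 : vv (i+1) = w
          · rw [if_pos h3] at C
            have h4 := hinv i w hw
            omega
          · rw [if_neg h3] at C
            have hgt : vv i < vv (i+1) := hvlt i hik
            have hz : rcnt S i w = 0 := by
              apply rcnt_zero
              intro j hj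
              rcases lt_trichotomy j (pos i) with hj' | hj' | hj'
              · have := (hbump i hik).2.2.1 j hj'
                omega
              · subst hj'
                have := hvE i hik
                omega
              · have hpj : pos i < S.rows i := (hbump i hik).1
                have hmono := row_mono S (le_of_lt hj') hj
                have := hvE i hik
                omega
            have hs := hstrict i hiK
            rw [← hwv] at hs
            have e : vv i = w - 1 := h2
            rw [e] at hs
            omega
        · have h4 := hinv i w hw
          rw [if_neg h2] at E2
          by_cases h1 : vv i = w <;> by_cases h3 : vv (i+1) = w
          · rw [if_pos h1] at C E1; rw [if_pos h3] at C; omega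
          · rw [if_pos h1] at C E1; rw [if_neg h3] at C; omega
          · rw [if_neg h1] at C E1; rw [if_pos h3] at C; omega
          · rw [if_neg h1] at C E1; rw [if_neg h3] at C; omega
  refine ⟨hInv', ?_, ?_⟩
  · intro q hq
    rw [hrows' q (by omega)]
    exact hd q (by omega)
  · intro w N hN
    have hstep : ∀ M, (∑ i ∈ range M, rcnt S' i w) + (if M ≤ K then (if vv M = w then 1 else 0) else 0)
        = (∑ i ∈ range M, rcnt S i w) + (if vv 0 = w then 1 else 0) := by
      intro M
      induction M with
      | zero => simp
      | succ M ihM =>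
        rw [Finset.sum_range_succ, Finset.sum_range_succ]
        rcases lt_trichotomy M K with hMK | hMK | hMK
        · rw [if_pos (le_of_lt hMK)] at ihM
          have hc := hc_lt M hMK w
          rw [if_pos (by omega : M + 1 ≤ K)]
          omega
        · subst hMK
          rw [if_pos le_rfl] at ihM
          have hc := hc_K w
          rw [if_neg (by omega : ¬ M + 1 ≤ M)]
          omega
        · rw [if_neg (by omega : ¬ M ≤ K)] at ihM
          have hc := hc_gt M hMK w
          rw [if_neg (by omega : ¬ M + 1 ≤ K)]
          omega
    have hfin := hstep N
    rw [if_neg (by omega : ¬ N ≤ K), hv0] at hfin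
    by_cases hwx : w = x
    · subst hwx
      rw [if_pos rfl] at hfin ⊢
      omega
    · rw [if_neg (fun hh => hwx hh.symm)] at hfin
      rw [if_neg hwx]
      omega

end Ins15
namespace Ins15

section Rside

variable (R : SSYT) (n : ℕ) (t : ℕ → ℕ)
variable (hbound : ∀ i j, j < R.rows i → 1 ≤ R.entry i j ∧ R.entry i j ≤ n)
variable (hdistinct : ∀ v, 1 ≤ v → v ≤ n →
      ∃! p : ℕ × ℕ, p.2 < R.rows p.1 ∧ R.entry p.1 p.2 = v)
variable (ht1 : ∀ m, 1 ≤ m → m ≤ n → 1 ≤ t m)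
variable (ht : ∀ m, 1 ≤ m → m ≤ n →
      ∃ j, j < R.rows (t m - 1) ∧ R.entry (t m - 1) j = n + 1 - m)

include hdistinct in
lemma Runiq {u i j i' j' : ℕ} (h1 : 1 ≤ u) (h2 : u ≤ n) (hj : j < R.rows i)
    (he : R.entry i j = u) (hj' : j' < R.rows i') (he' : R.entry i' j' = u) :
    i = i' ∧ j = j' := by
  obtain ⟨p, _, hp⟩ := hdistinct u h1 h2
  have e1 := hp (i, j) ⟨hj, he⟩
  have e2 := hp (i', j') ⟨hj', he'⟩
  have : (i, j) = (i', j') := e1.trans e2.symm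
  exact ⟨congrArg Prod.fst this, congrArg Prod.snd this⟩

include hdistinct ht1 ht in
lemma Rrow {u i j : ℕ} (h1 : 1 ≤ u) (h2 : u ≤ n) (hj : j < R.rows i)
    (he : R.entry i j = u) : t (n + 1 - u) = i + 1 := by
  have hk1 : 1 ≤ n + 1 - u := by omega
  have hk2 : n + 1 - u ≤ n := by omega
  obtain ⟨j', hj', he'⟩ := ht (n + 1 - u) hk1 hk2
  have hval : n + 1 - (n + 1 - u) = u := by omega
  rw [hval] at he'
  have hiq := (Runiq R n hdistinct h1 h2 hj' he' hj he).1
  have := ht1 (n + 1 - u) hk1 hk2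
  omega

include hbound hdistinct ht1 ht in
lemma Rlat : ∀ m w, 1 ≤ w →
    ((Finset.Ioc m n).filter (fun k => t k = w + 1)).card
      ≤ ((Finset.Ioc m n).filter (fun k => t k = w)).card := by
  intro m w hw
  classical
  have hchoice : ∀ k, ∃ j, 1 ≤ k → k ≤ n →
      j < R.rows (t k - 1) ∧ R.entry (t k - 1) j = n + 1 - k := by
    intro k
    by_cases hk : 1 ≤ k ∧ k ≤ n
    · obtain ⟨j, hj⟩ := ht k hk.1 hk.2
      exact ⟨j, fun _ _ => hj⟩
    · exact ⟨0, fun ha hb => absurd ⟨ha, hb⟩ hk⟩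
  choose col hcol using hchoice
  apply Finset.card_le_card_of_injOn (fun k => n + 1 - R.entry (w - 1) (col k))
  · intro k hk
    simp only [Finset.mem_coe, Finset.mem_filter, Finset.mem_Ioc] at hk
    obtain ⟨⟨hmk, hkn⟩, htk⟩ := hk
    have h1k : 1 ≤ k := by omega
    obtain ⟨hjr, hje⟩ := hcol k h1k hkn
    have e : t k - 1 = w := by omega
    rw [e] at hjr hje
    have hw1 : w - 1 + 1 = w := by omega
    have hja : col k < R.rows (w - 1) := by
      have := R.rows_anti (w - 1)
      rw [hw1] at this
      omega
    have hcs : R.entry (w - 1) (col k) < R.entry w (col k) := by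
      have := R.col_strict (w - 1) (col k) (by rw [hw1]; exact hjr)
      rwa [hw1] at this
    obtain ⟨hu1, hu2⟩ := hbound (w - 1) (col k) hja
    have htu : t (n + 1 - R.entry (w - 1) (col k)) = (w - 1) + 1 :=
      Rrow R n t hdistinct ht1 ht hu1 hu2 hja rfl
    simp only [Finset.mem_coe, Finset.mem_filter, Finset.mem_Ioc]
    refine ⟨⟨by omega, by omega⟩, by omega⟩
  · intro k1 hk1 k2 hk2 hf
    simp only [Finset.coe_filter, Set.mem_setOf_eq, Finset.mem_Ioc] at hk1 hk2
    obtain ⟨⟨hm1, hn1⟩, ht1'⟩ := hk1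
    obtain ⟨⟨hm2, hn2⟩, ht2'⟩ := hk2
    obtain ⟨hjr1, hje1⟩ := hcol k1 (by omega) hn1
    obtain ⟨hjr2, hje2⟩ := hcol k2 (by omega) hn2
    have e1 : t k1 - 1 = w := by omega
    have e2 : t k2 - 1 = w := by omega
    rw [e1] at hjr1 hje1
    rw [e2] at hjr2 hje2
    have hw1 : w - 1 + 1 = w := by omega
    have hja1 : col k1 < R.rows (w - 1) := by
      have := R.rows_anti (w - 1); rw [hw1] at this; omega
    have hja2 : col k2 < R.rows (w - 1) := by
      have := R.rows_anti (w - 1); rw [hw1] at this; omega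
    obtain ⟨hu11, hu12⟩ := hbound (w - 1) (col k1) hja1
    obtain ⟨hu21, hu22⟩ := hbound (w - 1) (col k2) hja2
    have hueq : R.entry (w - 1) (col k1) = R.entry (w - 1) (col k2) := by
      simp only at hf
      omega
    have hcc := (Runiq R n hdistinct hu11 hu12 hja1 rfl hja2 hueq.symm).2
    rw [hcc] at hje1
    omega

include hbound hdistinct ht1 ht in
lemma Rcount : ∀ i, ((Finset.Ioc 0 n).filter (fun k => t k = i + 1)).card = R.rows i := by
  intro i
  classical
  have hchoice : ∀ k, ∃ j, 1 ≤ k → k ≤ n →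
      j < R.rows (t k - 1) ∧ R.entry (t k - 1) j = n + 1 - k := by
    intro k
    by_cases hk : 1 ≤ k ∧ k ≤ n
    · obtain ⟨j, hj⟩ := ht k hk.1 hk.2
      exact ⟨j, fun _ _ => hj⟩
    · exact ⟨0, fun ha hb => absurd ⟨ha, hb⟩ hk⟩
  choose col hcol using hchoice
  rw [← Finset.card_range (R.rows i)]
  apply Finset.card_nbij' (i := fun k => col k) (j := fun j => n + 1 - R.entry i j)
  · intro k hk
    simp only [Finset.mem_coe, Finset.mem_filter, Finset.mem_Ioc] at hk
    obtain ⟨⟨hmk, hkn⟩, htk⟩ := hk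
    obtain ⟨hjr, _⟩ := hcol k (by omega) hkn
    have e : t k - 1 = i := by omega
    rw [e] at hjr
    exact Finset.mem_range.2 hjr
  · intro j hj
    have hj' := Finset.mem_range.1 hj
    obtain ⟨hu1, hu2⟩ := hbound i j hj'
    have htv : t (n + 1 - R.entry i j) = i + 1 :=
      Rrow R n t hdistinct ht1 ht hu1 hu2 hj' rfl
    simp only [Finset.mem_coe, Finset.mem_filter, Finset.mem_Ioc]
    exact ⟨⟨by omega, by omega⟩, htv⟩
  · intro k hk
    simp only [Finset.mem_coe, Finset.mem_filter, Finset.mem_Ioc] at hk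
    obtain ⟨⟨hmk, hkn⟩, htk⟩ := hk
    obtain ⟨hjr, hje⟩ := hcol k (by omega) hkn
    have e : t k - 1 = i := by omega
    rw [e] at hjr hje
    show n + 1 - R.entry i (col k) = k
    rw [hje]
    omega
  · intro j hj
    have hj' := Finset.mem_range.1 hj
    obtain ⟨hu1, hu2⟩ := hbound i j hj'
    have htv : t (n + 1 - R.entry i j) = i + 1 :=
      Rrow R n t hdistinct ht1 ht hu1 hu2 hj' rfl
    have hk1 : 1 ≤ n + 1 - R.entry i j := by omega
    have hkn : n + 1 - R.entry i j ≤ n := by omega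
    obtain ⟨hjr, hje⟩ := hcol (n + 1 - R.entry i j) hk1 hkn
    have e : t (n + 1 - R.entry i j) - 1 = i := by omega
    rw [e] at hjr hje
    have hval : n + 1 - (n + 1 - R.entry i j) = R.entry i j := by omega
    rw [hval] at hje
    exact (Runiq R n hdistinct hu1 hu2 hjr hje hj' rfl).2

end Rside

end Ins15
namespace Ins15

def Fc (t : ℕ → ℕ) (n m w : ℕ) : ℕ := ((Finset.Ioc m n).filter (fun k => t k = w)).card

lemma Fc_step (t : ℕ → ℕ) (n m : ℕ) (hm : m < n) (w : ℕ) :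
    Fc t n (m+1) w + (if w = t (m+1) then 1 else 0) = Fc t n m w := by
  classical
  unfold Fc
  have hi : Finset.Ioc m n = insert (m+1) (Finset.Ioc (m+1) n) := by
    ext k
    simp only [Finset.mem_Ioc, Finset.mem_insert]
    omega
  rw [hi, Finset.filter_insert]
  by_cases htw : t (m+1) = w
  · rw [if_pos htw, if_pos htw.symm, Finset.card_insert_of_notMem (by simp)]
  · rw [if_neg htw, if_neg (fun hh => htw hh.symm), add_zero]

lemma Fc_end (t : ℕ → ℕ) (n w : ℕ) : Fc t n n w = 0 := by
  simp [Fc]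

lemma fcn_const (S : SSYT) (F0 : ℕ → ℕ) (h : ∀ i w, rcnt S i w = 0) :
    ∀ i w, fcn S F0 i w = F0 w := by
  intro i
  induction i with
  | zero => intro w; rfl
  | succ i ih => intro w; simp only [fcn, ih w, h i w, add_zero]

end Ins15


/- STATEMENT 15: let R be a standard tableau of shape μ with n boxes and let
t_m (1 ≤ m ≤ n, written `t m`, 1-indexed row) be the row of R containing the
entry n+1−m.  Row-inserting t_1, then t_2, …, then t_n into the empty tableau
yields U(μ): the tableau of shape μ = R.rows all of whose entries in
(0-indexed) row i equal i+1. -/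
theorem insert_rows_of_standard_gives_U (R : SSYT) (n : ℕ)
    (hbound : ∀ i j, j < R.rows i → 1 ≤ R.entry i j ∧ R.entry i j ≤ n)
    (hdistinct : ∀ v, 1 ≤ v → v ≤ n →
      ∃! p : ℕ × ℕ, p.2 < R.rows p.1 ∧ R.entry p.1 p.2 = v)
    (t : ℕ → ℕ)
    (ht1 : ∀ m, 1 ≤ m → m ≤ n → 1 ≤ t m)
    (ht : ∀ m, 1 ≤ m → m ≤ n →
      ∃ j, j < R.rows (t m - 1) ∧ R.entry (t m - 1) j = n + 1 - m)
    (T : ℕ → SSYT)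
    (hT0 : (T 0).rows = fun _ => 0)
    (hTstep : ∀ m, m < n → RowInsert (T m) (t (m+1)) (T (m+1))) :
    (T n).rows = R.rows ∧
    (T n).entry = fun i j => if j < R.rows i then i + 1 else 0 := by
  classical
  open Ins15 in
  have hlatF : ∀ m w, 1 ≤ w → Fc t n m (w + 1) ≤ Fc t n m w := fun m w hw =>
    Rlat R n t hbound hdistinct ht1 ht m w hw
  have key : ∀ m, m ≤ n → InvP (T m) (Fc t n m) ∧ (∀ q, m ≤ q → (T m).rows q = 0) ∧
      (∀ w, (∑ i ∈ Finset.range (n+1), rcnt (T m) i w) + Fc t n m w = Fc t n 0 w) := by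
    intro m
    induction m with
    | zero =>
      intro _
      have hrow0 : ∀ i, (T 0).rows i = 0 := fun i => congrFun hT0 i
      have hr0 : ∀ i w, rcnt (T 0) i w = 0 := by
        intro i w
        unfold rcnt
        rw [hrow0 i]
        simp
      refine ⟨?_, fun q _ => hrow0 q, ?_⟩
      · intro i w hw
        rw [hr0 i w, fcn_const (T 0) _ hr0 i w, fcn_const (T 0) _ hr0 i (w - 1)]
        have := hlatF 0 (w - 1) (by omega)
        have e : w - 1 + 1 = w := by omega
        rw [e] at this
        omega
      · intro w
        rw [Finset.sum_eq_zero (fun i _ => hr0 i w), zero_add]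
    | succ m ih =>
      intro hm
      have hm' : m ≤ n := by omega
      obtain ⟨ih1, ih2, ih3⟩ := ih hm'
      obtain ⟨s1, s2, s3⟩ := step_all (T m) (T (m+1)) (t (m+1)) m (Fc t n m) (Fc t n (m+1))
        (hTstep m (by omega))
        (Fc_step t n m (by omega))
        (fun w hw => hlatF (m+1) w hw)
        (ht1 (m+1) (by omega) hm)
        ih2 ih1
      refine ⟨s1, s2, ?_⟩
      intro w
      have h3 := s3 w (n+1) (by omega)
      have h4 := Fc_step t n m (by omega) w
      have h5 := ih3 w
      rw [h3]
      omega
  obtain ⟨hInv, hemp, hcons⟩ := key n le_rfl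
  have Fn0 : ∀ w, Fc t n n w = 0 := Fc_end t n
  have fcn_sum : ∀ i w, fcn (T n) (Fc t n n) i w = ∑ j ∈ Finset.range i, rcnt (T n) j w := by
    intro i
    induction i with
    | zero => intro w; simp [fcn, Fn0 w]
    | succ i ihh =>
      intro w
      rw [Finset.sum_range_succ, ← ihh w]
      rfl
  have Czero : ∀ w i, i + 2 ≤ w → rcnt (T n) i w = 0 := by
    intro w
    induction w using Nat.strong_induction_on with
    | _ w IH =>
      intro i hi
      have h := hInv i w hi
      rw [fcn_sum i w, fcn_sum i (w - 1)] at h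
      have hz : ∑ j ∈ Finset.range i, rcnt (T n) j (w - 1) = 0 := by
        apply Finset.sum_eq_zero
        intro j hj
        have hj' := Finset.mem_range.1 hj
        exact IH (w - 1) (by omega) j (by omega)
      have hnn : (0:ℕ) ≤ ∑ j ∈ Finset.range i, rcnt (T n) j w := Nat.zero_le _
      omega
  have Clow : ∀ w i, w ≤ i → rcnt (T n) i w = 0 := by
    intro w i hwi
    apply rcnt_zero
    intro j hj
    have := entry_lb (T n) i j hj
    omega
  have allEq : ∀ i j, j < (T n).rows i → (T n).entry i j = i + 1 := by
    intro i j hj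
    have h1 := entry_lb (T n) i j hj
    by_contra hne
    have h2 : i + 2 ≤ (T n).entry i j := by omega
    have h3 := Czero ((T n).entry i j) i h2
    have h4 := rcnt_pos (T n) hj rfl
    omega
  have rows_eq : ∀ i, (T n).rows i = R.rows i := by
    intro i
    have hRc : ((Finset.Ioc 0 n).filter (fun k => t k = i + 1)).card = R.rows i :=
      Rcount R n t hbound hdistinct ht1 ht i
    have h5 := hcons (i + 1)
    rw [Fn0 (i + 1), add_zero] at h5
    have hsum : ∑ j ∈ Finset.range (n+1), rcnt (T n) j (i + 1) = rcnt (T n) i (i + 1) := by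
      apply Finset.sum_eq_single
      · intro j _ hne
        rcases lt_or_gt_of_ne hne with hlt | hgt
        · exact Czero (i + 1) j (by omega)
        · exact Clow (i + 1) j (by omega)
      · intro hni
        have hni' : n < i := by
          by_contra hc
          exact hni (Finset.mem_range.2 (by omega))
        apply rcnt_zero
        intro j hj
        have := hemp i (by omega)
        omega
    have hfull : rcnt (T n) i (i + 1) = (T n).rows i := rcnt_all (T n) (allEq i)
    rw [hsum, hfull] at h5
    rw [h5]
    exact hRc
  refine ⟨funext rows_eq, ?_⟩
  funext i j
  by_cases hj : j < R.rows i
  · rw [if_pos hj]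
    exact allEq i j (by rw [rows_eq i]; exact hj)
  · rw [if_neg hj]
    exact (T n).entry_zero i j (by rw [rows_eq i]; omega)
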